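/- Let N be a positive odd integer and let B be an integer with 2 ≤ B ≤ (N+1)/2. Let w ∈ ℂ^N be a window and i an integer such that the DFT of w satisfies ŵ_{(i+t) mod N} = 0 for all t = 0, …, N − B − 1 and ŵ_{(i+N−B) mod N} ≠ 0. Let 0 < L < N be a separation parameter and let z ∈ ℂ^N be any analytic signal. Then N·|ŷ^w_{k0, 0}(z)| = |ẑ_{(N−1)/2}|·|ŵ_{(i+N−B) mod N}|, where k0 = ((N−1)/2 − (i + N − B)) mod N; consequently there exists θ ∈ ℝ with ẑ_{(N−1)/2} = (N·|ŷ^w_{k0,0}(z)| / |ŵ_{(i+N−B) mod N}|)·exp(i·θ), i.e., ẑ_{(N−1)/2} is determined up to a unimodular scalar by this single STFT measurement. -/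

import Mathlib

open Complex

/-- Discrete Fourier transform of a signal indexed by `ZMod N`. -/
noncomputable def dft {N : ℕ} (z : ZMod N → ℂ) (k : ZMod N) : ℂ :=
  ∑ n ∈ Finset.range N, z n *
    Complex.exp (-2 * (Real.pi : ℂ) * Complex.I * (k.val : ℂ) * (n : ℂ) / N)

/-- Short-time Fourier transform measurement `ŷ^w_{k,m}(z)` with window `w` and
separation parameter `L`. -/
noncomputable def stft {N : ℕ} (w : ZMod N → ℂ) (L : ℤ) (z : ZMod N → ℂ) (k m : ℤ) : ℂ :=
  ∑ n ∈ Finset.range N, z n * w ((m * L - n : ℤ) : ZMod N) *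
    Complex.exp (-2 * (Real.pi : ℂ) * Complex.I * (k : ℂ) * (n : ℂ) / N)

/-- The DFT of the analytic signal associated with a real signal `x`. -/
noncomputable def analyticHat (N : ℕ) (x : ZMod N → ℝ) (k : ℕ) : ℂ :=
  if N % 2 = 0 then
    if k = 0 then dft (fun n => (x n : ℂ)) 0
    else if k ≤ N / 2 - 1 then 2 * dft (fun n => (x n : ℂ)) (k : ZMod N)
    else if k = N / 2 then dft (fun n => (x n : ℂ)) ((N / 2 : ℕ) : ZMod N)
    else 0
  else
    if k = 0 then dft (fun n => (x n : ℂ)) 0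
    else if k ≤ (N - 1) / 2 then 2 * dft (fun n => (x n : ℂ)) (k : ZMod N)
    else 0

/-- The analytic signal `A(x)` of a real signal `x`, obtained by inverse DFT. -/
noncomputable def analyticSignal {N : ℕ} (x : ZMod N → ℝ) : ZMod N → ℂ :=
  fun n => (1 / N : ℂ) * ∑ k ∈ Finset.range N, analyticHat N x k *
    Complex.exp (2 * (Real.pi : ℂ) * Complex.I * (k : ℂ) * (n.val : ℂ) / N)

/-- A signal `z ∈ ℂ^N` is analytic if `z = A(x)` for some real signal `x`. -/
def IsAnalytic {N : ℕ} (z : ZMod N → ℂ) : Prop := ∃ x : ZMod N → ℝ, z = analyticSignal x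

noncomputable def E (N : ℕ) (m : ℤ) : ℂ := Complex.exp (2 * (Real.pi:ℂ) * I * m / N)

lemma E_add (N : ℕ) (a b : ℤ) : E N (a+b) = E N a * E N b := by
  rw [E, E, E, ← Complex.exp_add]; congr 1; push_cast; ring

lemma E_dvd (N : ℕ) (hN : 0 < N) (a : ℤ) (h : (N:ℤ) ∣ a) : E N a = 1 := by
  obtain ⟨t, rfl⟩ := h
  rw [E]
  have hN' : (N:ℂ) ≠ 0 := Nat.cast_ne_zero.2 hN.ne'
  have : 2 * (Real.pi:ℂ) * I * (((N:ℤ) * t : ℤ) : ℂ) / N = t * (2 * Real.pi * I) := by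
    push_cast; field_simp
  rw [this, Complex.exp_int_mul_two_pi_mul_I]

lemma E_congr (N : ℕ) (hN : 0 < N) (a b : ℤ) (h : (N:ℤ) ∣ (a - b)) : E N a = E N b := by
  have ha : a = b + (a - b) := by ring
  rw [ha, E_add, E_dvd N hN _ h, mul_one]

lemma E_pow (N : ℕ) (a : ℤ) (n : ℕ) : E N a ^ n = E N (a * n) := by
  rw [E, E, ← Complex.exp_nat_mul]; congr 1; push_cast; ring

lemma E_ne_one (N : ℕ) (hN : 0 < N) (a : ℤ) (h : ¬ (N:ℤ) ∣ a) : E N a ≠ 1 := by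
  intro hE
  rw [E, Complex.exp_eq_one_iff] at hE
  obtain ⟨n, hn⟩ := hE
  apply h
  refine ⟨n, ?_⟩
  have hN' : (N:ℂ) ≠ 0 := Nat.cast_ne_zero.2 hN.ne'
  have hpi : (Real.pi:ℂ) ≠ 0 := by exact_mod_cast Real.pi_ne_zero
  have h2 : (2:ℂ) * Real.pi * I ≠ 0 := by
    simp [Complex.I_ne_zero, hpi]
  have hc : (a : ℂ) = N * n := by
    field_simp at hn
    apply mul_left_cancel₀ h2
    linear_combination (2 * (Real.pi:ℂ) * I) * hn
  exact_mod_cast hc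

lemma E_orth (N : ℕ) (hN : 0 < N) (d : ℤ) :
    ∑ n ∈ Finset.range N, E N (d * n) = if (N:ℤ) ∣ d then (N:ℂ) else 0 := by
  by_cases h : (N:ℤ) ∣ d
  · simp only [h, if_true]
    calc ∑ n ∈ Finset.range N, E N (d * n) = ∑ n ∈ Finset.range N, (1:ℂ) :=
          Finset.sum_congr rfl (fun n _ => E_dvd N hN _ (h.mul_right n))
      _ = N := by simp
  · simp only [h, if_false]
    calc ∑ n ∈ Finset.range N, E N (d * n) = ∑ n ∈ Finset.range N, E N d ^ n :=
          Finset.sum_congr rfl (fun n _ => (E_pow N d n).symm)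
      _ = (E N d ^ N - 1) / (E N d - 1) := geom_sum_eq (E_ne_one N hN d h) N
      _ = 0 := by rw [E_pow, E_dvd N hN _ ⟨d, by ring⟩, sub_self, zero_div]

lemma zmod_val_int (N : ℕ) [NeZero N] (q : ℤ) : (N:ℤ) ∣ (((q : ZMod N)).val : ℤ) - q := by
  rw [← ZMod.intCast_zmod_eq_zero_iff_dvd]
  push_cast [ZMod.natCast_val, ZMod.cast_id]
  ring_nf

lemma sum_zmod {N : ℕ} [NeZero N] (f : ZMod N → ℂ) :
    ∑ n ∈ Finset.range N, f n = ∑ a : ZMod N, f a := by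
  refine Finset.sum_nbij' (fun n => (n : ZMod N)) (fun a => a.val) ?_ ?_ ?_ ?_ ?_
  · intro n _; exact Finset.mem_univ _
  · intro a _; exact Finset.mem_range.2 (ZMod.val_lt a)
  · intro n hn; exact ZMod.val_natCast_of_lt (Finset.mem_range.1 hn)
  · intro a _; exact ZMod.natCast_val a |>.trans (ZMod.cast_id _ _)
  · intro n _; rfl

lemma dft_eq {N : ℕ} (z : ZMod N → ℂ) (k : ZMod N) :
    dft z k = ∑ n ∈ Finset.range N, z n * E N (-((k.val : ℤ) * n)) := by
  refine Finset.sum_congr rfl fun n _ => ?_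
  rw [E]; congr 1; push_cast; ring

lemma flip_sum {N : ℕ} [NeZero N] (w : ZMod N → ℂ) (q : ℤ) :
    ∑ n ∈ Finset.range N, w ((-(n:ℤ) : ℤ) : ZMod N) * E N (q * n) =
      dft w ((q : ℤ) : ZMod N) := by
  have hN : 0 < N := Nat.pos_of_ne_zero (NeZero.ne N)
  set r : ℤ := ((((q : ℤ) : ZMod N)).val : ℤ) with hr
  have hrq : (N:ℤ) ∣ r - q := zmod_val_int N q
  calc ∑ n ∈ Finset.range N, w ((-(n:ℤ) : ℤ) : ZMod N) * E N (q * n)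
      = ∑ a : ZMod N, w (-a) * E N (q * a.val) := by
        rw [← sum_zmod (f := fun a => w (-a) * E N (q * a.val))]
        refine Finset.sum_congr rfl fun n hn => ?_
        have hn' := Finset.mem_range.1 hn
        have h1 : ((-(n:ℤ) : ℤ) : ZMod N) = -((n:ℕ) : ZMod N) := by push_cast; ring
        have h2 : ((((n:ℕ)) : ZMod N)).val = n := ZMod.val_natCast_of_lt hn'
        rw [h1, h2]
    _ = ∑ a : ZMod N, w a * E N (-(r * a.val)) := by
        refine Fintype.sum_equiv (Equiv.neg (ZMod N)) _ _ fun a => ?_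
        simp only [Equiv.neg_apply]
        have hval : (N:ℤ) ∣ ((a).val : ℤ) + ((-a).val : ℤ) := by
          have hc : ((((a).val + (-a).val : ℕ)) : ZMod N) = 0 := by
            push_cast [ZMod.natCast_val, ZMod.cast_id]; ring
          have : N ∣ (a).val + (-a).val := (ZMod.natCast_eq_zero_iff _ _).1 hc
          exact_mod_cast Int.natCast_dvd_natCast.2 this
        have hE : E N (q * a.val) = E N (-(r * (-a).val)) := by
          apply E_congr N hN
          obtain ⟨u, hu⟩ := hval
          obtain ⟨v, hv⟩ := hrq
          refine ⟨q * u + v * (-a).val, ?_⟩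
          push_cast
          linear_combination (q:ℤ) * hu + (((-a).val:ℕ):ℤ) * hv
        rw [hE]
    _ = dft w ((q : ℤ) : ZMod N) := by
        rw [dft_eq]
        rw [← sum_zmod (f := fun a => w a * E N (-(r * a.val)))]
        refine Finset.sum_congr rfl fun n hn => ?_
        rw [ZMod.val_natCast_of_lt (Finset.mem_range.1 hn), hr]

lemma dvd_iff_eq_of_lt (N j k : ℕ) (hj : j < N) (hk : k < N) :
    (N:ℤ) ∣ ((j:ℤ) - k) ↔ j = k := by
  constructor
  · intro ⟨t, ht⟩
    have hN : (0:ℤ) < N := by omega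
    have h1 : (N:ℤ) * t < N * 1 := by rw [mul_one]; linarith [ht]
    have h2 : (N:ℤ) * (-1) < N * t := by linarith [ht]
    have t1 : t < 1 := (mul_lt_mul_iff_right₀ hN).1 h1
    have t2 : (-1:ℤ) < t := (mul_lt_mul_iff_right₀ hN).1 h2
    have : t = 0 := by omega
    subst this
    omega
  · rintro rfl; simp

lemma dft_analytic {N : ℕ} [NeZero N] (x : ZMod N → ℝ) (k : ℕ) (hk : k < N) :
    dft (analyticSignal x) ((k : ℕ) : ZMod N) = analyticHat N x k := by
  have hN : 0 < N := Nat.pos_of_ne_zero (NeZero.ne N)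
  have hNC : (N:ℂ) ≠ 0 := Nat.cast_ne_zero.2 hN.ne'
  rw [dft_eq]
  have hval : ((((k:ℕ)) : ZMod N)).val = k := ZMod.val_natCast_of_lt hk
  have hz : ∀ n ∈ Finset.range N, analyticSignal x ((n:ℕ) : ZMod N) *
      E N (-((((k:ℕ):ZMod N).val : ℤ) * n)) =
      (1/N : ℂ) * ∑ j ∈ Finset.range N, analyticHat N x j * E N (((j:ℤ) - k) * n) := by
    intro n hn
    have hn' := Finset.mem_range.1 hn
    rw [analyticSignal, hval, ZMod.val_natCast_of_lt hn', mul_assoc, Finset.sum_mul]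
    congr 1
    refine Finset.sum_congr rfl fun j _ => ?_
    rw [mul_assoc]
    congr 1
    rw [show (((j:ℤ) - k) * n) = (j * n : ℤ) + (-(k * n) : ℤ) by ring, E_add]
    congr 1
    · rw [E]; congr 1; push_cast; ring
  rw [Finset.sum_congr rfl hz, ← Finset.mul_sum, Finset.sum_comm]
  have horth : ∀ j ∈ Finset.range N,
      ∑ n ∈ Finset.range N, analyticHat N x j * E N (((j:ℤ) - k) * n) =
      if j = k then (N:ℂ) * analyticHat N x j else 0 := by
    intro j hj
    rw [← Finset.mul_sum, E_orth N hN]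
    by_cases h : j = k
    · simp [h, mul_comm]
    · rw [if_neg, if_neg h, mul_zero]
      rw [dvd_iff_eq_of_lt N j k (Finset.mem_range.1 hj) hk]
      exact h
  rw [Finset.sum_congr rfl horth, Finset.sum_ite_eq' (Finset.range N) k
    (fun j => (N:ℂ) * analyticHat N x j)]
  simp only [Finset.mem_range.2 hk, if_true]
  field_simp

lemma stft_eval {N : ℕ} [NeZero N] (hOdd : N % 2 = 1)
    (B : ℕ) (hB2 : 2 ≤ B) (hBle : B ≤ (N + 1) / 2)
    (w : ZMod N → ℂ) (i : ℤ)
    (hzero : ∀ t : ℕ, (t : ℤ) ≤ (N : ℤ) - B - 1 → dft w ((i + t : ℤ) : ZMod N) = 0)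
    (L : ℤ) (x : ZMod N → ℝ) :
    stft w L (analyticSignal x) ((((N - 1) / 2 : ℕ) : ℤ) - (i + N - B)) 0 =
      (1/N : ℂ) * analyticHat N x ((N - 1) / 2) * dft w ((i + N - B : ℤ) : ZMod N) := by
  have hN : 0 < N := Nat.pos_of_ne_zero (NeZero.ne N)
  set h : ℕ := (N - 1) / 2 with hh
  set k0 : ℤ := ((h : ℕ) : ℤ) - (i + N - B) with hk0
  have hNh : N = 2 * h + 1 := by omega
  have hN3 : 3 ≤ N := by omega
  have hBh : B ≤ h + 1 := by omega
  have hhN : h < N := by omega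
  rw [stft]
  have step1 : ∀ n ∈ Finset.range N,
      analyticSignal x ((n:ℕ) : ZMod N) * w ((0 * L - n : ℤ) : ZMod N) *
        Complex.exp (-2 * (Real.pi : ℂ) * Complex.I * (k0 : ℂ) * (n : ℂ) / N) =
      (1/N : ℂ) * ∑ j ∈ Finset.range N,
        analyticHat N x j * (w ((-(n:ℤ) : ℤ) : ZMod N) * E N (((j:ℤ) - k0) * n)) := by
    intro n hn
    have hn' := Finset.mem_range.1 hn
    have harg : ((0 * L - n : ℤ) : ZMod N) = ((-(n:ℤ) : ℤ) : ZMod N) := by norm_num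
    rw [harg, analyticSignal, ZMod.val_natCast_of_lt hn']
    rw [mul_assoc, mul_assoc, Finset.sum_mul]
    congr 1
    refine Finset.sum_congr rfl fun j _ => ?_
    have hE : Complex.exp (2 * (Real.pi : ℂ) * Complex.I * (j : ℂ) * (n : ℂ) / N) *
        (w ((-(n:ℤ) : ℤ) : ZMod N) *
          Complex.exp (-2 * (Real.pi : ℂ) * Complex.I * (k0 : ℂ) * (n : ℂ) / N)) =
        w ((-(n:ℤ) : ℤ) : ZMod N) * E N (((j:ℤ) - k0) * n) := by
      rw [show (((j:ℤ) - k0) * n) = (j * n : ℤ) + (-(k0 * n) : ℤ) by ring, E_add]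
      rw [mul_comm, mul_assoc]
      congr 1
      rw [mul_comm, E, E]
      congr 2 <;> push_cast <;> ring
    rw [mul_assoc, hE]
  rw [Finset.sum_congr rfl step1, ← Finset.mul_sum, Finset.sum_comm]
  have step2 : ∀ j ∈ Finset.range N,
      ∑ n ∈ Finset.range N,
        analyticHat N x j * (w ((-(n:ℤ) : ℤ) : ZMod N) * E N (((j:ℤ) - k0) * n)) =
      analyticHat N x j * dft w ((((j:ℤ) - k0) : ℤ) : ZMod N) := by
    intro j _
    rw [← Finset.mul_sum, flip_sum w ((j:ℤ) - k0)]
  rw [Finset.sum_congr rfl step2]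
  have step3 : ∀ j ∈ Finset.range N, j ≠ h →
      analyticHat N x j * dft w ((((j:ℤ) - k0) : ℤ) : ZMod N) = 0 := by
    intro j hj hjh
    have hj' := Finset.mem_range.1 hj
    rcases lt_or_gt_of_ne hjh with hlt | hgt
    · -- j < h : window dft vanishes
      set t : ℕ := N + j - B - h with ht
      have htle : (t : ℤ) ≤ (N : ℤ) - B - 1 := by omega
      have harg : ((i + t : ℤ)) = ((j:ℤ) - k0) := by
        rw [hk0]; omega
      rw [← harg, hzero t htle, mul_zero]
    · -- j > h : analyticHat vanishes
      have hc : analyticHat N x j = 0 := by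
        rw [analyticHat, if_neg (by omega), if_neg (by omega), if_neg (by omega)]
      rw [hc, zero_mul]
  rw [Finset.sum_eq_single_of_mem h (Finset.mem_range.2 hhN) step3]
  have harg2 : (((h:ℤ) - k0) : ℤ) = (i + (N:ℤ) - B) := by rw [hk0]; ring
  rw [harg2, mul_assoc]

/-- for odd `N`, the component `ẑ_{(N-1)/2}` of an analytic signal is
determined up to a unimodular scalar by a single STFT measurement. -/
theorem recover_top_component_odd (N : ℕ) (hN : 0 < N) (hOdd : N % 2 = 1)
    (B : ℕ) (hB2 : 2 ≤ B) (hBle : B ≤ (N + 1) / 2)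
    (w : ZMod N → ℂ) (i : ℤ)
    (hzero : ∀ t : ℕ, (t : ℤ) ≤ (N : ℤ) - B - 1 → dft w ((i + t : ℤ) : ZMod N) = 0)
    (hwB : dft w ((i + N - B : ℤ) : ZMod N) ≠ 0)
    (L : ℤ) (hL0 : 0 < L) (hLN : L < (N : ℤ))
    (z : ZMod N → ℂ) (hz : IsAnalytic z) :
    (N : ℝ) * norm (stft w L z ((((N - 1) / 2 : ℕ) : ℤ) - (i + N - B)) 0) =
      norm (dft z (((N - 1) / 2 : ℕ) : ZMod N)) *
        norm (dft w ((i + N - B : ℤ) : ZMod N)) ∧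
    ∃ θ : ℝ, dft z (((N - 1) / 2 : ℕ) : ZMod N) =
        ((N * norm (stft w L z ((((N - 1) / 2 : ℕ) : ℤ) - (i + N - B)) 0) /
          norm (dft w ((i + N - B : ℤ) : ZMod N)) : ℝ) : ℂ) *
          Complex.exp (Complex.I * θ) := by
  haveI : NeZero N := ⟨hN.ne'⟩
  obtain ⟨x, rfl⟩ := hz
  have hhN : (N - 1) / 2 < N := by omega
  have hdz : dft (analyticSignal x) ((((N - 1) / 2 : ℕ)) : ZMod N) =
      analyticHat N x ((N - 1) / 2) := dft_analytic x _ hhN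
  have hS := stft_eval hOdd B hB2 hBle w i hzero L x
  have hNR : (0:ℝ) < (N:ℝ) := by exact_mod_cast hN
  have habs : (N : ℝ) *
      norm (stft w L (analyticSignal x) ((((N - 1) / 2 : ℕ) : ℤ) - (i + N - B)) 0) =
      norm (analyticHat N x ((N - 1) / 2)) *
        norm (dft w ((i + N - B : ℤ) : ZMod N)) := by
    rw [hS, norm_mul, norm_mul]
    have : norm (1/N : ℂ) = 1 / (N:ℝ) := by
      rw [norm_div, norm_one, Complex.norm_natCast]
    rw [this]
    field_simp
  have part1 : (N : ℝ) *
      norm (stft w L (analyticSignal x) ((((N - 1) / 2 : ℕ) : ℤ) - (i + N - B)) 0) =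
      norm (dft (analyticSignal x) (((N - 1) / 2 : ℕ) : ZMod N)) *
        norm (dft w ((i + N - B : ℤ) : ZMod N)) := by
    rw [hdz]; exact habs
  refine ⟨part1, (dft (analyticSignal x) (((N - 1) / 2 : ℕ) : ZMod N)).arg, ?_⟩
  have hWabs : norm (dft w ((i + N - B : ℤ) : ZMod N)) ≠ 0 := by
    simpa using hwB
  have hcoef : (N:ℝ) *
      norm (stft w L (analyticSignal x) ((((N - 1) / 2 : ℕ) : ℤ) - (i + N - B)) 0) /
      norm (dft w ((i + N - B : ℤ) : ZMod N)) =
      norm (dft (analyticSignal x) (((N - 1) / 2 : ℕ) : ZMod N)) := by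
    rw [part1, mul_div_assoc, div_self hWabs, mul_one]
  rw [hcoef]
  rw [show Complex.I * ((dft (analyticSignal x) (((N - 1) / 2 : ℕ) : ZMod N)).arg : ℂ) =
    ((dft (analyticSignal x) (((N - 1) / 2 : ℕ) : ZMod N)).arg : ℂ) * Complex.I from mul_comm _ _]
  exact (Complex.norm_mul_exp_arg_mul_I _).symm
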